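/- Consider the two-block undirected stochastic blockmodel with connectivity matrix B = [[a, b],[b, a]] where 0 < b < a < 1, membership probability vector π = (π_1, 1−π_1) with 0 < π_1 < 1, and dense regime ρ_∞ = 1. Then the asymptotic covariance matrix from Theorem 1 for block ℓ = 1, namely Σ_1 = {diag(π)^{-1/2} T_B^{-1} J Δ_X^{-1}} · E_ξ[g_1(ξ, T_B e_1)] · {Δ_X^{-1} J (T_B^{-1})^T diag(π)^{-1/2}}, is the symmetric 2×2 matrix with entries Σ_1[1,1] = (a^3(1−a)(1−π_1) + b^3(1−b)π_1) / ((a^2−b^2)^2 π_1^2 (1−π_1)), Σ_1[1,2] = Σ_1[2,1] = −ab(a(1−a) + (a−b)(a+b−1)π_1) / ((a^2−b^2)^2 (π_1(1−π_1))^{3/2}), and Σ_1[2,2] = (a^2 b π_1 + a b^2(1−a−π_1)) / ((a^2−b^2)^2 π_1 (1−π_1)^2). -/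

import Mathlib

open Matrix

private lemma pr3 {x c : ℝ} (h : x^2 = c) : x^3 = c*x := by rw [pow_succ, h]
private lemma pr4 {x c : ℝ} (h : x^2 = c) : x^4 = c^2 := by rw [show (4:ℕ)=2*2 from rfl, pow_mul, h]
private lemma pr5 {x c : ℝ} (h : x^2 = c) : x^5 = c^2*x := by rw [pow_succ, pr4 h]
private lemma pr6 {x c : ℝ} (h : x^2 = c) : x^6 = c^3 := by rw [show (6:ℕ)=2*3 from rfl, pow_mul, h]
private lemma pr7 {x c : ℝ} (h : x^2 = c) : x^7 = c^3*x := by rw [pow_succ, pr6 h]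
private lemma pr8 {x c : ℝ} (h : x^2 = c) : x^8 = c^4 := by rw [show (8:ℕ)=2*4 from rfl, pow_mul, h]
private lemma pr9 {x c : ℝ} (h : x^2 = c) : x^9 = c^4*x := by rw [pow_succ, pr8 h]
private lemma pr10 {x c : ℝ} (h : x^2 = c) : x^10 = c^5 := by rw [show (10:ℕ)=2*5 from rfl, pow_mul, h]
private lemma pr11 {x c : ℝ} (h : x^2 = c) : x^11 = c^5*x := by rw [pow_succ, pr10 h]
private lemma pr12 {x c : ℝ} (h : x^2 = c) : x^12 = c^6 := by rw [show (12:ℕ)=2*6 from rfl, pow_mul, h]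
private lemma pr13 {x c : ℝ} (h : x^2 = c) : x^13 = c^6*x := by rw [pow_succ, pr12 h]
private lemma pr14 {x c : ℝ} (h : x^2 = c) : x^14 = c^7 := by rw [show (14:ℕ)=2*7 from rfl, pow_mul, h]
private lemma pr15 {x c : ℝ} (h : x^2 = c) : x^15 = c^7*x := by rw [pow_succ, pr14 h]
private lemma pr16 {x c : ℝ} (h : x^2 = c) : x^16 = c^8 := by rw [show (16:ℕ)=2*8 from rfl, pow_mul, h]


/-- `g_1(ξ, x) = (xᵀ J ξ)(1 − xᵀ J ξ) ξ ξᵀ` with `J = I₂` (dense regime `ρ_∞ = 1`). -/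
noncomputable def gOne (ξ x : Fin 2 → ℝ) : Matrix (Fin 2) (Fin 2) ℝ :=
  ((x ⬝ᵥ ξ) * (1 - x ⬝ᵥ ξ)) • Matrix.vecMulVec ξ ξ

set_option maxHeartbeats 2000000 in
/-- In the two-block undirected stochastic blockmodel with
`B = [[a,b],[b,a]]`, `0 < b < a < 1`, membership probabilities `(π₁, 1−π₁)`, and dense
regime `ρ_∞ = 1`, the asymptotic covariance matrix of Theorem 1 for block `ℓ = 1` has the
stated closed form. -/
theorem block_one_covariance_closed_form
    (a b π₁ : ℝ) (hb : 0 < b) (hba : b < a) (ha : a < 1)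
    (hπ₁ : 0 < π₁) (hπ₁' : π₁ < 1) :
    let UB : Matrix (Fin 2) (Fin 2) ℝ := (Real.sqrt 2)⁻¹ • !![1, 1; 1, -1]
    let TB : Matrix (Fin 2) (Fin 2) ℝ :=
      Matrix.diagonal ![Real.sqrt (a + b), Real.sqrt (a - b)] * UBᵀ
    let J : Matrix (Fin 2) (Fin 2) ℝ := 1
    let ξ₁ : Fin 2 → ℝ := TB.mulVec ![1, 0]
    let ξ₂ : Fin 2 → ℝ := TB.mulVec ![0, 1]
    let ΔX : Matrix (Fin 2) (Fin 2) ℝ :=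
      π₁ • Matrix.vecMulVec ξ₁ ξ₁ + (1 - π₁) • Matrix.vecMulVec ξ₂ ξ₂
    let Eg : (Fin 2 → ℝ) → Matrix (Fin 2) (Fin 2) ℝ := fun x =>
      π₁ • gOne ξ₁ x + (1 - π₁) • gOne ξ₂ x
    let Dπ : Matrix (Fin 2) (Fin 2) ℝ :=
      Matrix.diagonal ![(Real.sqrt π₁)⁻¹, (Real.sqrt (1 - π₁))⁻¹]
    let Sig1 : Matrix (Fin 2) (Fin 2) ℝ :=
      (Dπ * TB⁻¹ * J * ΔX⁻¹) * Eg ξ₁ * (ΔX⁻¹ * J * (TB⁻¹)ᵀ * Dπ)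
    Sig1 = !![(a ^ 3 * (1 - a) * (1 - π₁) + b ^ 3 * (1 - b) * π₁) /
              ((a ^ 2 - b ^ 2) ^ 2 * π₁ ^ 2 * (1 - π₁)),
            -(a * b * (a * (1 - a) + (a - b) * (a + b - 1) * π₁)) /
              ((a ^ 2 - b ^ 2) ^ 2 * (π₁ * (1 - π₁)) ^ ((3 : ℝ) / 2));
            -(a * b * (a * (1 - a) + (a - b) * (a + b - 1) * π₁)) /
              ((a ^ 2 - b ^ 2) ^ 2 * (π₁ * (1 - π₁)) ^ ((3 : ℝ) / 2)),
            (a ^ 2 * b * π₁ + a * b ^ 2 * (1 - a - π₁)) /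
              ((a ^ 2 - b ^ 2) ^ 2 * π₁ * (1 - π₁) ^ 2)] := by
  
  intro UB TB J ξ₁ ξ₂ ΔX Eg Dπ Sig1
  have hab : 0 < a + b := by linarith
  have hamb : 0 < a - b := by linarith
  have h1π : 0 < 1 - π₁ := by linarith
  set s := Real.sqrt 2 with hsd
  set p := Real.sqrt (a + b) with hpd
  set q := Real.sqrt (a - b) with hqd
  set u := Real.sqrt π₁ with hud
  set v := Real.sqrt (1 - π₁) with hvd
  have hs0 : 0 < s := Real.sqrt_pos.2 (by norm_num)
  have hp0 : 0 < p := Real.sqrt_pos.2 hab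
  have hq0 : 0 < q := Real.sqrt_pos.2 hamb
  have hu0 : 0 < u := Real.sqrt_pos.2 hπ₁
  have hv0 : 0 < v := Real.sqrt_pos.2 h1π
  have hs2 : s ^ 2 = 2 := Real.sq_sqrt (by norm_num)
  have hp2 : p ^ 2 = a + b := Real.sq_sqrt hab.le
  have hq2 : q ^ 2 = a - b := Real.sq_sqrt hamb.le
  have hu2 : u ^ 2 = π₁ := Real.sq_sqrt hπ₁.le
  have hv2 : v ^ 2 = 1 - π₁ := Real.sq_sqrt h1π.le
  have hsne : s ≠ 0 := ne_of_gt hs0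
  have hpne : p ≠ 0 := ne_of_gt hp0
  have hqne : q ≠ 0 := ne_of_gt hq0
  have hune : u ≠ 0 := ne_of_gt hu0
  have hvne : v ≠ 0 := ne_of_gt hv0
  have hπne : π₁ ≠ 0 := ne_of_gt hπ₁
  have h1πne : (1 - π₁) ≠ 0 := ne_of_gt h1π
  have hv2' : v ^ 2 = 1 - u ^ 2 := by rw [hv2, hu2]
  have habs : (a^2 - b^2) ≠ 0 := by nlinarith
  have hTB : TB = !![s⁻¹ * p, s⁻¹ * p; s⁻¹ * q, -(s⁻¹ * q)] := by
    have h2 : TB = Matrix.diagonal ![p, q] * UBᵀ := rfl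
    have h3 : UB = s⁻¹ • !![1, 1; 1, -1] := rfl
    rw [h2, h3]
    ext i j
    fin_cases i <;> fin_cases j <;>
      simp [Matrix.mul_apply, Fin.sum_univ_two, Matrix.diagonal, Matrix.transpose_apply,
        Matrix.vecHead, Matrix.vecTail] <;> ring
  have hξ₁ : ξ₁ = ![s⁻¹ * p, s⁻¹ * q] := by
    have h1 : ξ₁ = TB.mulVec ![1, 0] := rfl
    rw [h1, hTB]; funext i
    fin_cases i <;> simp [Matrix.mulVec, dotProduct, Fin.sum_univ_two]
  have hξ₂ : ξ₂ = ![s⁻¹ * p, -(s⁻¹ * q)] := by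
    have h1 : ξ₂ = TB.mulVec ![0, 1] := rfl
    rw [h1, hTB]; funext i
    fin_cases i <;> simp [Matrix.mulVec, dotProduct, Fin.sum_univ_two]
  have hTBinv : TB⁻¹ = !![(s * p)⁻¹, (s * q)⁻¹; (s * p)⁻¹, -((s * q)⁻¹)] := by
    apply inv_eq_right_inv
    rw [hTB]
    ext i j
    fin_cases i <;> fin_cases j <;>
      simp [Matrix.mul_apply, Fin.sum_univ_two, Matrix.one_apply] <;> (try field_simp ; try ring_nf ; try simp only [hs2, hp2, hq2, hu2, hv2, pr3 hs2, pr4 hs2, pr5 hs2, pr6 hs2, pr7 hs2, pr8 hs2, pr3 hu2, pr4 hu2, pr5 hu2, pr6 hu2, pr7 hu2, pr8 hu2, pr3 hv2, pr4 hv2, pr5 hv2, pr6 hv2, pr7 hv2, pr8 hv2, pr3 hp2, pr4 hp2, pr5 hp2, pr6 hp2, pr7 hp2, pr8 hp2, pr9 hp2, pr10 hp2, pr11 hp2, pr12 hp2, pr13 hp2, pr14 hp2, pr15 hp2, pr16 hp2, pr3 hq2, pr4 hq2, pr5 hq2, pr6 hq2, pr7 hq2, pr8 hq2, pr9 hq2,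 pr10 hq2, pr11 hq2, pr12 hq2, pr13 hq2, pr14 hq2, pr15 hq2, pr16 hq2] ; try ring_nf ; try ring)
  have hΔX : ΔX = !![(a+b)/2, (2*π₁-1)*(p*q)/2; (2*π₁-1)*(p*q)/2, (a-b)/2] := by
    have h1 : ΔX = π₁ • Matrix.vecMulVec ξ₁ ξ₁ + (1 - π₁) • Matrix.vecMulVec ξ₂ ξ₂ := rfl
    rw [h1, hξ₁, hξ₂]
    ext i j
    fin_cases i <;> fin_cases j <;>
      simp [Matrix.vecMulVec_apply] <;> (try field_simp ; try ring_nf ; try simp only [hs2, hp2, hq2, hu2, hv2, pr3 hs2, pr4 hs2, pr5 hs2, pr6 hs2, pr7 hs2, pr8 hs2, pr3 hu2, pr4 hu2, pr5 hu2, pr6 hu2, pr7 hu2, pr8 hu2, pr3 hv2, pr4 hv2, pr5 hv2, pr6 hv2, pr7 hv2, pr8 hv2, pr3 hp2, pr4 hp2, pr5 hp2, pr6 hp2, pr7 hp2, pr8 hp2, pr9 hp2, pr10 hp2, pr11 hp2, pr12 hp2, pr13 hp2, pr14 hp2, pr15 hp2, pr16 hp2, pr3 hq2, pr4 hq2, pr5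 hq2, pr6 hq2, pr7 hq2, pr8 hq2, pr9 hq2, pr10 hq2, pr11 hq2, pr12 hq2, pr13 hq2, pr14 hq2, pr15 hq2, pr16 hq2] ; try ring_nf ; try ring)
  have hΔXinv : ΔX⁻¹ = !![(a-b)/(2*((a^2-b^2)*π₁*(1-π₁))),
        -((2*π₁-1)*(p*q))/(2*((a^2-b^2)*π₁*(1-π₁)));
        -((2*π₁-1)*(p*q))/(2*((a^2-b^2)*π₁*(1-π₁))),
        (a+b)/(2*((a^2-b^2)*π₁*(1-π₁)))] := by
    apply inv_eq_right_inv
    rw [hΔX]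
    ext i j
    fin_cases i <;> fin_cases j <;>
      simp [Matrix.mul_apply, Fin.sum_univ_two, Matrix.one_apply] <;> (try field_simp ; try ring_nf ; try simp only [hs2, hp2, hq2, hu2, hv2, pr3 hs2, pr4 hs2, pr5 hs2, pr6 hs2, pr7 hs2, pr8 hs2, pr3 hu2, pr4 hu2, pr5 hu2, pr6 hu2, pr7 hu2, pr8 hu2, pr3 hv2, pr4 hv2, pr5 hv2, pr6 hv2, pr7 hv2, pr8 hv2, pr3 hp2, pr4 hp2, pr5 hp2, pr6 hp2, pr7 hp2, pr8 hp2, pr9 hp2, pr10 hp2, pr11 hp2, pr12 hp2, pr13 hp2, pr14 hp2, pr15 hp2, pr16 hp2, pr3 hq2, pr4 hq2, pr5 hq2, pr6 hq2, pr7 hq2, pr8 hq2, pr9 hq2, pr10 hq2, pr11 hq2, pr12 hq2, pr13 hq2, pr14 hq2, pr15 hq2, pr16 hq2] ; try ring_nf ; try ring)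
  have hd1 : ξ₁ ⬝ᵥ ξ₁ = a := by
    rw [hξ₁]
    simp only [dotProduct, Fin.sum_univ_two, Matrix.cons_val_zero, Matrix.cons_val_one, Matrix.head_cons]
    (try field_simp ; try ring_nf ; try simp only [hs2, hp2, hq2, hu2, hv2, pr3 hs2, pr4 hs2, pr5 hs2, pr6 hs2, pr7 hs2, pr8 hs2, pr3 hu2, pr4 hu2, pr5 hu2, pr6 hu2, pr7 hu2, pr8 hu2, pr3 hv2, pr4 hv2, pr5 hv2, pr6 hv2, pr7 hv2, pr8 hv2, pr3 hp2, pr4 hp2, pr5 hp2, pr6 hp2, pr7 hp2, pr8 hp2, pr9 hp2, pr10 hp2, pr11 hp2, pr12 hp2, pr13 hp2, pr14 hp2, pr15 hp2, pr16 hp2, pr3 hq2, pr4 hq2, pr5 hq2, pr6 hq2, pr7 hq2, pr8 hq2, pr9 hq2, pr10 hq2, pr11 hq2, pr12 hq2, pr13 hq2, pr14 hq2, pr15 hq2, pr16 hq2] ; try ring_nf ; try ring)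
  have hd2 : ξ₁ ⬝ᵥ ξ₂ = b := by
    rw [hξ₁, hξ₂]
    simp only [dotProduct, Fin.sum_univ_two, Matrix.cons_val_zero, Matrix.cons_val_one, Matrix.head_cons]
    (try field_simp ; try ring_nf ; try simp only [hs2, hp2, hq2, hu2, hv2, pr3 hs2, pr4 hs2, pr5 hs2, pr6 hs2, pr7 hs2, pr8 hs2, pr3 hu2, pr4 hu2, pr5 hu2, pr6 hu2, pr7 hu2, pr8 hu2, pr3 hv2, pr4 hv2, pr5 hv2, pr6 hv2, pr7 hv2, pr8 hv2, pr3 hp2, pr4 hp2, pr5 hp2, pr6 hp2, pr7 hp2, pr8 hp2, pr9 hp2, pr10 hp2, pr11 hp2, pr12 hp2, pr13 hp2, pr14 hp2, pr15 hp2, pr16 hp2, pr3 hq2, pr4 hq2, pr5 hq2, pr6 hq2, pr7 hq2, pr8 hq2, pr9 hq2, pr10 hq2, pr11 hq2, pr12 hq2, pr13 hq2, pr14 hq2, pr15 hq2, pr16 hq2] ; try ring_nf ; try ring)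
  have hEg : Eg ξ₁ = !![(π₁*(a*(1-a)) + (1-π₁)*(b*(1-b)))*((a+b)/2),
        (π₁*(a*(1-a)) - (1-π₁)*(b*(1-b)))*((p*q)/2);
        (π₁*(a*(1-a)) - (1-π₁)*(b*(1-b)))*((p*q)/2),
        (π₁*(a*(1-a)) + (1-π₁)*(b*(1-b)))*((a-b)/2)] := by
    have h1 : Eg ξ₁ = π₁ • gOne ξ₁ ξ₁ + (1 - π₁) • gOne ξ₂ ξ₁ := rfl
    rw [h1]
    unfold gOne
    rw [hd1, hd2, hξ₁, hξ₂]
    ext i j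
    fin_cases i <;> fin_cases j <;>
      simp [Matrix.vecMulVec_apply] <;> (try field_simp ; try ring_nf ; try simp only [hs2, hp2, hq2, hu2, hv2, pr3 hs2, pr4 hs2, pr5 hs2, pr6 hs2, pr7 hs2, pr8 hs2, pr3 hu2, pr4 hu2, pr5 hu2, pr6 hu2, pr7 hu2, pr8 hu2, pr3 hv2, pr4 hv2, pr5 hv2, pr6 hv2, pr7 hv2, pr8 hv2, pr3 hp2, pr4 hp2, pr5 hp2, pr6 hp2, pr7 hp2, pr8 hp2, pr9 hp2, pr10 hp2, pr11 hp2, pr12 hp2, pr13 hp2, pr14 hp2, pr15 hp2, pr16 hp2, pr3 hq2, pr4 hq2, pr5 hq2, pr6 hq2, pr7 hq2, pr8 hq2, pr9 hq2, pr10 hq2, pr11 hq2, pr12 hq2, pr13 hq2, pr14 hq2, pr15 hq2, pr16 hq2] ; try ring_nf ; try ring)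
  have hDπ : Dπ = !![u⁻¹, 0; 0, v⁻¹] := by
    have h1 : Dπ = Matrix.diagonal ![u⁻¹, v⁻¹] := rfl
    rw [h1]
    ext i j
    fin_cases i <;> fin_cases j <;> simp [Matrix.diagonal]
  have h32 : (π₁ * (1 - π₁)) ^ ((3:ℝ)/2) = (u*v)^3 := by
    have huv : π₁ * (1 - π₁) = (u*v)^2 := by rw [mul_pow, hu2, hv2]
    rw [huv, ← Real.rpow_natCast (u*v) 2, ← Real.rpow_mul (by positivity),
      ← Real.rpow_natCast (u*v) 3]
    norm_num
  have hS : Sig1 = (Dπ * TB⁻¹ * J * ΔX⁻¹) * Eg ξ₁ * (ΔX⁻¹ * J * (TB⁻¹)ᵀ * Dπ) := rfl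
  have hJ : J = 1 := rfl
  rw [hS, hJ, mul_one, mul_one, hTBinv, hΔXinv, hEg, hDπ]
  ext i j
  fin_cases i <;> fin_cases j <;>
    simp only [Matrix.mul_apply, Fin.sum_univ_two, Matrix.transpose_apply,
      Matrix.cons_val', Matrix.cons_val_zero, Matrix.cons_val_one, Matrix.head_cons,
      Matrix.head_fin_const, Matrix.empty_val', Matrix.cons_val_fin_one,
      Matrix.of_apply, h32, Fin.zero_eta, Fin.mk_one, Fin.isValue] <;>
    (field_simp ;
     rw [show a = (p^2+q^2)/2 by rw [hp2, hq2]; ring,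
        show b = (p^2-q^2)/2 by rw [hp2, hq2]; ring,
        show π₁ = u^2 from hu2.symm] ;
     ring_nf ;
     simp only [hs2, hv2', pr3 hs2, pr4 hs2, pr5 hs2, pr6 hs2, pr7 hs2, pr8 hs2, pr3 hv2', pr4 hv2', pr5 hv2', pr6 hv2', pr7 hv2', pr8 hv2'] ;
     try ring_nf ;
     try ring)
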